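/- Let π be a probability row 4-vector with all entries positive, Π = diag(π), and let Pᵃ, Pᵇ be invertible 4×4 strand-symmetric matrices. Define J = (Pᵇ)ᵀ Π Pᵃ and G = S J⁻¹ S J. Then G = (Pᵃ)⁻¹ D Pᵃ, where D = diag(π(1)/π(4), π(2)/π(3), π(3)/π(2), π(4)/π(1)). -/

import Mathlib

open Matrix

noncomputable def S : Matrix (Fin 4) (Fin 4) ℝ :=
  Matrix.of fun i j => if (i : ℕ) + (j : ℕ) = 3 then 1 else 0

lemma fv0 : ((0:Fin 4):ℕ) = 0 := rfl
lemma fv1 : ((1:Fin 4):ℕ) = 1 := rfl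
lemma fv2 : ((2:Fin 4):ℕ) = 2 := rfl
lemma fv3 : ((3:Fin 4):ℕ) = 3 := rfl

lemma hS2 : S * S = 1 := by
  ext i j
  fin_cases i <;> fin_cases j <;>
    norm_num [S, Matrix.mul_apply, Fin.sum_univ_four, Matrix.one_apply,
      fv0, fv1, fv2, fv3] <;> simp (config := {decide := true})

lemma hST : Sᵀ = S := by
  ext i j
  simp [S, Matrix.transpose_apply, Nat.add_comm]

lemma hSinv : S⁻¹ = S := Matrix.inv_eq_left_inv hS2

/-- If `S M S = M` then `S` commutes with `M`. -/
lemma commS (M : Matrix (Fin 4) (Fin 4) ℝ) (h : S * M * S = M) : S * M = M * S := by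
  conv_lhs => rw [← h]
  rw [← Matrix.mul_assoc, ← Matrix.mul_assoc, hS2, Matrix.one_mul]

/-- If `S M S = M` then `S M⁻¹ S = M⁻¹`. -/
lemma conjS_inv (M : Matrix (Fin 4) (Fin 4) ℝ) (h : S * M * S = M) :
    S * M⁻¹ * S = M⁻¹ := by
  have h1 : (S * M * S)⁻¹ = S * (M⁻¹ * S) := by
    rw [Matrix.mul_inv_rev, Matrix.mul_inv_rev, hSinv]
  rw [h] at h1
  rw [Matrix.mul_assoc]
  exact h1.symm

lemma S_diag_S (v : Fin 4 → ℝ) :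
    S * diagonal v * S = diagonal ![v 3, v 2, v 1, v 0] := by
  ext i j
  fin_cases i <;> fin_cases j <;>
    norm_num [S, Matrix.mul_apply, Fin.sum_univ_four, Matrix.diagonal,
      fv0, fv1, fv2, fv3] <;> simp (config := {decide := true})

/-- The eigendecomposition at the heart of Lemma 1: G = S J⁻¹ S J = (Pᵃ)⁻¹ D Pᵃ. -/
theorem G_eigendecomposition (π : Fin 4 → ℝ)
    (hpos : ∀ i, 0 < π i) (hsum : ∑ i, π i = 1)
    (Pa Pb : Matrix (Fin 4) (Fin 4) ℝ)
    (hPa : IsUnit Pa) (hPb : IsUnit Pb)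
    (hssa : S * Pa * S = Pa) (hssb : S * Pb * S = Pb) :
    S * (Pbᵀ * diagonal π * Pa)⁻¹ * S * (Pbᵀ * diagonal π * Pa) =
      Pa⁻¹ * diagonal ![π 0 / π 3, π 1 / π 2, π 2 / π 1, π 3 / π 0] * Pa := by
  have hne : ∀ i, π i ≠ 0 := fun i => (hpos i).ne'
  have hssbT : S * Pbᵀ * S = Pbᵀ := by
    have := congrArg Matrix.transpose hssb
    simpa [Matrix.transpose_mul, hST, Matrix.mul_assoc] using this
  have hPbT : IsUnit Pbᵀ.det := by
    rw [Matrix.det_transpose]; exact (Matrix.isUnit_iff_isUnit_det Pb).mp hPb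
  have hSa : S * Pa⁻¹ = Pa⁻¹ * S := commS _ (conjS_inv Pa hssa)
  have hcommb : S * Pbᵀ = Pbᵀ * S := commS _ hssbT
  have hinvπ : Ring.inverse π = fun i => (π i)⁻¹ :=
    Ring.inverse_unit ⟨π, fun i => (π i)⁻¹,
      funext fun i => mul_inv_cancel₀ (hne i), funext fun i => inv_mul_cancel₀ (hne i)⟩
  -- the diagonal computation
  have key : S * (diagonal π)⁻¹ * S * diagonal π =
      diagonal ![π 0 / π 3, π 1 / π 2, π 2 / π 1, π 3 / π 0] := by
    rw [Matrix.inv_diagonal, hinvπ, S_diag_S, Matrix.diagonal_mul_diagonal]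
    ext i j
    rcases eq_or_ne i j with rfl | hij
    · fin_cases i <;>
        simp [Matrix.diagonal_apply_eq, div_eq_mul_inv, mul_comm]
    · simp [Matrix.diagonal_apply_ne _ hij]
  -- expand the inverse of J and normalize associativity
  rw [Matrix.mul_inv_rev, Matrix.mul_inv_rev]
  simp only [Matrix.mul_assoc]
  -- cancel (Pbᵀ)⁻¹ S Pbᵀ = S
  rw [show (Pbᵀ)⁻¹ * (S * (Pbᵀ * (diagonal π * Pa))) = S * (diagonal π * Pa) by
    rw [← Matrix.mul_assoc S Pbᵀ, hcommb, Matrix.mul_assoc, ← Matrix.mul_assoc,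
      Matrix.nonsing_inv_mul _ hPbT, Matrix.one_mul]]
  -- move S past Pa⁻¹
  rw [← Matrix.mul_assoc S Pa⁻¹, hSa]
  -- finish with the diagonal computation
  rw [Matrix.mul_assoc]
  congr 1
  simp only [← Matrix.mul_assoc]
  rw [key]
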